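/- (Correctness of Algorithm 3.) Let Y be a discrete random variable and S a finite set of discrete random variables with Y ∉ S, and let M₀ be a Markov boundary of Y within S. Then M₀ is the unique Markov boundary of Y within S if and only if every X ∈ M₀ is essential for Y, i.e., if and only if there is no X ∈ M₀ with Y conditionally independent of X given S \ {X}. -/
import Mathlib


open scoped BigOperators

noncomputable section

/-- `p` is a probability mass function on the finite type `Ω`. -/
def IsDist {Ω : Type*} [Fintype Ω] (p : Ω → ℝ) : Prop :=
  (∀ w, 0 ≤ p w) ∧ ∑ w, p w = 1

/-- Total variation distance between two distributions on the same finite type. -/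
def tvDist {Ω : Type*} [Fintype Ω] (p q : Ω → ℝ) : ℝ :=
  (∑ w, |p w - q w|) / 2

variable {ι : Type*} [Fintype ι] [DecidableEq ι]
variable {α : ι → Type*} [∀ i, Fintype (α i)] [∀ i, DecidableEq (α i)]

/-- Marginal probability, under joint pmf `p`, of the event that the variables in the
collection `A` take the values prescribed by the configuration `x`. -/
def margProb (p : (∀ i, α i) → ℝ) (A : Finset ι) (x : ∀ i, α i) : ℝ :=
  ∑ w : ∀ i, α i, if ∀ i ∈ A, w i = x i then p w else 0

/-- Conditional independence of the collections `A` and `B` given the collection `C`: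
`f(a, b | c) = f(a | c) f(b | c)` whenever `f(c) > 0` (stated in multiplied-out form). -/
def CondIndep (p : (∀ i, α i) → ℝ) (A B C : Finset ι) : Prop :=
  ∀ x : ∀ i, α i, 0 < margProb p C x →
    margProb p (A ∪ B ∪ C) x * margProb p C x =
      margProb p (A ∪ C) x * margProb p (B ∪ C) x

/-- `M` is a Markov blanket of the variable `y` within the collection `T`. -/
def MarkovBlanket (p : (∀ i, α i) → ℝ) (y : ι) (T M : Finset ι) : Prop :=
  M ⊆ T ∧ CondIndep p {y} (T \ M) M

/-- `M` is a Markov boundary of `y` within `T`: a Markov blanket no proper subset of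
which is a Markov blanket. -/
def MarkovBoundary (p : (∀ i, α i) → ℝ) (y : ι) (T M : Finset ι) : Prop :=
  MarkovBlanket p y T M ∧ ∀ M' ⊂ M, ¬ MarkovBlanket p y T M'

/-- Mutual information between the collections `A` and `B`
(with the convention `0 · log(junk) = 0` on zero-probability terms). -/
def MI (p : (∀ i, α i) → ℝ) (A B : Finset ι) : ℝ :=
  ∑ w : ∀ i, α i, p w *
    Real.log (margProb p (A ∪ B) w / (margProb p A w * margProb p B w))

/-- Conditional mutual information between collections `A` and `B` given `C`
(with the convention `0 · log(junk) = 0` on zero-probability terms). -/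
def CMI (p : (∀ i, α i) → ℝ) (A B C : Finset ι) : ℝ :=
  ∑ w : (∀ i, α i), p w *
    Real.log ((margProb p (A ∪ B ∪ C) w * margProb p C w) /
      (margProb p (A ∪ C) w * margProb p (B ∪ C) w))


variable [∀ i, Nonempty (α i)]

lemma margProb_nonneg (p : (∀ i, α i) → ℝ) (hp : ∀ w, 0 ≤ p w) (A : Finset ι) (x : ∀ i, α i) :
    0 ≤ margProb p A x := by
  refine Finset.sum_nonneg fun w _ => ?_
  split
  · exact hp w
  · exact le_rfl

lemma margProb_mono (p : (∀ i, α i) → ℝ) (hp : ∀ w, 0 ≤ p w) {A B : Finset ι} (hAB : A ⊆ B)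
    (x : ∀ i, α i) : margProb p B x ≤ margProb p A x := by
  refine Finset.sum_le_sum fun w _ => ?_
  by_cases h : ∀ i ∈ B, w i = x i
  · rw [if_pos h, if_pos fun i hi => h i (hAB hi)]
  · rw [if_neg h]
    split
    · exact hp w
    · exact le_rfl

lemma margProb_update (p : (∀ i, α i) → ℝ) {A : Finset ι} {j : ι} (hj : j ∉ A)
    (x : ∀ i, α i) (b : α j) : margProb p A (Function.update x j b) = margProb p A x := by
  refine Finset.sum_congr rfl fun w _ => ?_
  have h : (∀ i ∈ A, w i = Function.update x j b i) ↔ (∀ i ∈ A, w i = x i) := by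
    refine forall₂_congr fun i hi => ?_
    rw [Function.update_of_ne (by rintro rfl; exact hj hi)]
  exact if_congr h rfl rfl

lemma sum_margProb_update (p : (∀ i, α i) → ℝ) {A : Finset ι} {j : ι} (hj : j ∉ A)
    (x : ∀ i, α i) :
    ∑ b : α j, margProb p (insert j A) (Function.update x j b) = margProb p A x := by
  unfold margProb
  rw [Finset.sum_comm]
  refine Finset.sum_congr rfl fun w _ => ?_
  have hcond : ∀ b : α j,
      (∀ i ∈ insert j A, w i = Function.update x j b i) ↔ (b = w j ∧ ∀ i ∈ A, w i = x i) := by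
    intro b
    constructor
    · intro h
      refine ⟨?_, fun i hi => ?_⟩
      · have := h j (Finset.mem_insert_self j A)
        rw [Function.update_self] at this
        exact this.symm
      · have := h i (Finset.mem_insert_of_mem hi)
        rwa [Function.update_of_ne (by rintro rfl; exact hj hi)] at this
    · rintro ⟨hb, h⟩ i hi
      rcases Finset.mem_insert.mp hi with rfl | hiA
      · rw [Function.update_self]; exact hb.symm
      · rw [Function.update_of_ne (by rintro rfl; exact hj hiA)]; exact h i hiA
  calc ∑ b : α j, (if ∀ i ∈ insert j A, w i = Function.update x j b i then p w else 0)
      = ∑ b : α j, (if b = w j then (if ∀ i ∈ A, w i = x i then p w else 0) else 0) := by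
        refine Finset.sum_congr rfl fun b _ => ?_
        rw [if_congr (hcond b) rfl rfl, ite_and]
    _ = (if ∀ i ∈ A, w i = x i then p w else 0) := by
        rw [Finset.sum_ite_eq' Finset.univ (w j)
          (fun _ => (if ∀ i ∈ A, w i = x i then p w else 0)), if_pos (Finset.mem_univ _)]

lemma condIndep_decomp (p : (∀ i, α i) → ℝ) {A C D : Finset ι} {j : ι}
    (hjA : j ∉ A) (hjC : j ∉ C) (hjD : j ∉ D)
    (h : CondIndep p A (insert j C) D) : CondIndep p A C D := by
  intro x hx
  have hupd : ∀ b : α j, 0 < margProb p D (Function.update x j b) := by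
    intro b; rwa [margProb_update p hjD]
  have key := fun b : α j => h (Function.update x j b) (hupd b)
  have s1 : A ∪ insert j C ∪ D = insert j (A ∪ C ∪ D) := by
    ext i
    simp only [Finset.mem_union, Finset.mem_insert]
    tauto
  have s2 : insert j C ∪ D = insert j (C ∪ D) := by
    ext i
    simp only [Finset.mem_union, Finset.mem_insert]
    tauto
  have hjACD : j ∉ A ∪ C ∪ D := by simp [hjA, hjC, hjD]
  have hjCD : j ∉ C ∪ D := by simp [hjC, hjD]
  calc margProb p (A ∪ C ∪ D) x * margProb p D x
      = ∑ b : α j, margProb p (A ∪ insert j C ∪ D) (Function.update x j b) * margProb p D x := by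
        rw [← Finset.sum_mul, s1, sum_margProb_update p hjACD]
    _ = ∑ b : α j, margProb p (A ∪ insert j C ∪ D) (Function.update x j b)
          * margProb p D (Function.update x j b) := by
        refine Finset.sum_congr rfl fun b _ => ?_
        rw [margProb_update p hjD]
    _ = ∑ b : α j, margProb p (A ∪ D) (Function.update x j b)
          * margProb p (insert j C ∪ D) (Function.update x j b) := by
        exact Finset.sum_congr rfl fun b _ => key b
    _ = ∑ b : α j, margProb p (A ∪ D) x * margProb p (insert j C ∪ D) (Function.update x j b) := by
        refine Finset.sum_congr rfl fun b _ => ?_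
        rw [margProb_update p (by simp [hjA, hjD] : j ∉ A ∪ D)]
    _ = margProb p (A ∪ D) x * margProb p (C ∪ D) x := by
        rw [← Finset.mul_sum, s2, sum_margProb_update p hjCD]

lemma condIndep_weakUnion (p : (∀ i, α i) → ℝ) (hp : ∀ w, 0 ≤ p w) {A C D : Finset ι} {j : ι}
    (hjA : j ∉ A) (hjC : j ∉ C) (hjD : j ∉ D)
    (h : CondIndep p A (insert j C) D) : CondIndep p A {j} (C ∪ D) := by
  have hd := condIndep_decomp p hjA hjC hjD h
  intro x hx
  have hD : 0 < margProb p D x :=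
    lt_of_lt_of_le hx (margProb_mono p hp Finset.subset_union_right x)
  have h1 := h x hD
  have h2 := hd x hD
  have s1 : A ∪ {j} ∪ (C ∪ D) = A ∪ insert j C ∪ D := by
    ext i
    simp only [Finset.mem_union, Finset.mem_insert, Finset.mem_singleton]
    tauto
  have s2 : ({j} : Finset ι) ∪ (C ∪ D) = insert j C ∪ D := by
    ext i
    simp only [Finset.mem_union, Finset.mem_insert, Finset.mem_singleton]
    tauto
  have s3 : A ∪ (C ∪ D) = A ∪ C ∪ D := (Finset.union_assoc A C D).symm
  rw [s1, s2, s3]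
  apply mul_right_cancel₀ hD.ne'
  calc margProb p (A ∪ insert j C ∪ D) x * margProb p (C ∪ D) x * margProb p D x
      = (margProb p (A ∪ insert j C ∪ D) x * margProb p D x) * margProb p (C ∪ D) x := by ring
    _ = (margProb p (A ∪ D) x * margProb p (insert j C ∪ D) x) * margProb p (C ∪ D) x := by
        rw [h1]
    _ = (margProb p (A ∪ C ∪ D) x * margProb p D x) * margProb p (insert j C ∪ D) x := by
        linear_combination (- margProb p (insert j C ∪ D) x) * h2
    _ = margProb p (A ∪ C ∪ D) x * margProb p (insert j C ∪ D) x * margProb p D x := by ring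

lemma exists_boundary_subset (p : (∀ i, α i) → ℝ) (y : ι) (T : Finset ι) :
    ∀ B : Finset ι, MarkovBlanket p y T B → ∃ M, M ⊆ B ∧ MarkovBoundary p y T M := by
  intro B
  induction B using Finset.strongInductionOn with
  | _ B ih =>
    intro hB
    by_cases h : ∃ M' ⊂ B, MarkovBlanket p y T M'
    · obtain ⟨M', hM', hbl⟩ := h
      obtain ⟨M, hMsub, hMb⟩ := ih M' hM' hbl
      exact ⟨M, hMsub.trans hM'.subset, hMb⟩
    · push_neg at h
      exact ⟨B, Finset.Subset.refl B, hB, h⟩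

/-- correctness of Algorithm 3: a Markov boundary `M₀` of `Y` within `S`
is the unique Markov boundary of `Y` within `S` iff every `X ∈ M₀` is essential for `Y`,
i.e. iff there is no `X ∈ M₀` with `Y` conditionally independent of `X` given
`S \ {X}`. -/
theorem algorithm3_correctness
    (p : (∀ i, α i) → ℝ) (hp : IsDist p)
    (y : ι) (S : Finset ι) (hyS : y ∉ S)
    (M₀ : Finset ι) (hM₀ : MarkovBoundary p y S M₀) :
    (∀ M, MarkovBoundary p y S M → M = M₀) ↔
      ¬ ∃ X ∈ M₀, CondIndep p {y} {X} (S.erase X) := by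
  obtain ⟨hM₀bl, hM₀min⟩ := hM₀
  constructor
  · rintro huniq ⟨X, hXM₀, hci⟩
    have hXS : X ∈ S := hM₀bl.1 hXM₀
    have hbl : MarkovBlanket p y S (S.erase X) := by
      refine ⟨Finset.erase_subset _ _, ?_⟩
      have hs : S \ S.erase X = {X} := by
        ext i
        simp only [Finset.mem_sdiff, Finset.mem_erase, Finset.mem_singleton, not_and]
        constructor
        · rintro ⟨hiS, hi⟩
          by_contra hne
          exact (hi hne) hiS
        · rintro rfl
          exact ⟨hXS, fun h _ => (h rfl).elim⟩
      rw [hs]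
      exact hci
    obtain ⟨M, hMsub, hMbd⟩ := exists_boundary_subset p y S (S.erase X) hbl
    have heq := huniq M hMbd
    subst heq
    exact (Finset.mem_erase.mp (hMsub hXM₀)).1 rfl
  · intro hess M hM
    have key : ∀ X ∈ M₀, X ∈ M := by
      intro X hX
      by_contra hXM
      apply hess
      refine ⟨X, hX, ?_⟩
      have hXS : X ∈ S := hM₀bl.1 hX
      have hXsd : X ∈ S \ M := Finset.mem_sdiff.mpr ⟨hXS, hXM⟩
      have h1 : CondIndep p {y} (insert X ((S \ M).erase X)) M := by
        rw [Finset.insert_erase hXsd]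
        exact hM.1.2
      have hXy : X ∉ ({y} : Finset ι) := by
        simp only [Finset.mem_singleton]
        rintro rfl
        exact hyS hXS
      have h2 := condIndep_weakUnion p hp.1 hXy (Finset.notMem_erase X _) hXM h1
      have hset : (S \ M).erase X ∪ M = S.erase X := by
        ext i
        simp only [Finset.mem_union, Finset.mem_erase, Finset.mem_sdiff]
        constructor
        · rintro (⟨hne, hiS, _⟩ | hiM)
          · exact ⟨hne, hiS⟩
          · exact ⟨fun he => hXM (he ▸ hiM), hM.1.1 hiM⟩
        · rintro ⟨hne, hiS⟩
          by_cases hiM : i ∈ M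
          · exact Or.inr hiM
          · exact Or.inl ⟨hne, hiS, hiM⟩
      rwa [hset] at h2
    by_contra hne
    exact hM.2 M₀ (Finset.ssubset_iff_subset_ne.mpr ⟨key, fun h => hne h.symm⟩) hM₀bl


end
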